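/- Let P be a 2r-dimensional manifold, Ω̄ a symplectic form on P, X a vector field on P, and g a smooth positive function on P such that gX is a Hamiltonian vector field with respect to Ω̄ (i.e. i_{gX} Ω̄ = dH for some H ∈ C^∞(P)). Then the volume form g Ω̄^r is invariant under the flow of X, i.e. L_X (g Ω̄^r) = 0. -/

import Mathlib

open BigOperators

noncomputable section

variable {E : Type*} [NormedAddCommGroup E] [NormedSpace ℝ E]

/-- Exterior derivative of a `k`-form (viewed as a function of a point and `k`
constant vector arguments), via the standard coordinate formula. -/
def dform {k : ℕ} (ω : E → (Fin k → E) → ℝ) : E → (Fin (k + 1) → E) → ℝ :=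
  fun x v => ∑ i : Fin (k + 1), (-1 : ℝ) ^ (i : ℕ) *
    fderiv ℝ (fun y => ω y (fun j => v (i.succAbove j))) x (v i)

/-- Interior product `i_X ω`. -/
def iprod {k : ℕ} (X : E → E) (ω : E → (Fin (k + 1) → E) → ℝ) :
    E → (Fin k → E) → ℝ :=
  fun x v => ω x (Fin.cons (X x) v)

/-- Lie derivative `L_X ω` of a `k`-form along the vector field `X`
(the value on constant vector arguments). -/
def lieD {k : ℕ} (X : E → E) (ω : E → (Fin k → E) → ℝ) : E → (Fin k → E) → ℝ :=
  fun x v => fderiv ℝ (fun y => ω y v) x (X x)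
    + ∑ i : Fin k, ω x (Function.update v i (fderiv ℝ X x (v i)))

/-- A function of a point and `k` vector arguments is a genuine differential
`k`-form when it is pointwise an alternating multilinear map. -/
def IsPtwiseForm {k : ℕ} (ω : E → (Fin k → E) → ℝ) : Prop :=
  ∀ x, ∃ B : E [⋀^Fin k]→ₗ[ℝ] ℝ, ∀ v, ω x v = B v

/-- The `r`-th exterior power `Ω^r` of a 2-form. -/
def wpow (Ω : E → (Fin 2 → E) → ℝ) (r : ℕ) : E → (Fin (2 * r) → E) → ℝ :=
  fun x v => (1 / ((2 : ℝ) ^ r * (Nat.factorial r : ℝ))) *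
    ∑ σ : Equiv.Perm (Fin (2 * r)), ((Equiv.Perm.sign σ : ℤ) : ℝ) *
      ∏ i : Fin r,
        Ω x ![v (σ ⟨2 * i.1, by have := i.2; omega⟩),
              v (σ ⟨2 * i.1 + 1, by have := i.2; omega⟩)]


open Matrix

section DetHelpers
variable {n : ℕ}


lemma detRow_basis : (Matrix.detRowAlternating (fun j => (Pi.single j 1 : Fin n → ℝ)) : ℝ) = 1 := by
  have h : (fun j => (Pi.single j 1 : Fin n → ℝ)) = ⇑(Pi.basisFun ℝ (Fin n)) := by
    funext j; simp [Pi.basisFun_apply]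
  rw [h, ← Pi.basisFun_det]
  exact Module.Basis.det_self _

lemma detRow_update_basis (i : Fin n) (c : Fin n → ℝ) :
    (Matrix.detRowAlternating
      (Function.update (fun j => (Pi.single j 1 : Fin n → ℝ)) i c) : ℝ) = c i := by
  have hc : c = ∑ l, c l • (Pi.single l 1 : Fin n → ℝ) := by
    funext k; simp [Pi.single_apply]
  rw [hc, AlternatingMap.map_update_sum]
  have h1 : ∀ l : Fin n, (Matrix.detRowAlternating
      (Function.update (fun j => (Pi.single j 1 : Fin n → ℝ)) i
        (c l • (Pi.single l 1 : Fin n → ℝ))) : ℝ)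
      = if l = i then c l else 0 := by
    intro l
    rw [AlternatingMap.map_update_smul]
    by_cases hl : l = i
    · subst hl
      rw [Function.update_eq_self, detRow_basis]
      simp
    · have hz : (Matrix.detRowAlternating
          (Function.update (fun j => (Pi.single j 1 : Fin n → ℝ)) i
            (Pi.single l 1 : Fin n → ℝ)) : ℝ) = 0 := by
        refine Matrix.detRowAlternating.map_eq_zero_of_eq _ (i := i) (j := l) ?_ ?_
        · rw [Function.update_self, Function.update_of_ne hl]
        · exact fun h => hl h.symm
      rw [hz, smul_zero, if_neg hl]
  rw [Finset.sum_congr rfl fun l _ => h1 l]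
  simp [Pi.single_apply]

lemma detRow_expand (u : Fin n → Fin n → ℝ) :
    (Matrix.detRowAlternating u : ℝ) =
      ∑ σ : Equiv.Perm (Fin n), ((Equiv.Perm.sign σ : ℤ) : ℝ) * ∏ j, u j (σ j) := by
  have h : (Matrix.detRowAlternating u : ℝ) = Matrix.det (Matrix.of u) := rfl
  rw [h, ← Matrix.det_transpose, Matrix.det_apply]
  refine Finset.sum_congr rfl fun σ _ => ?_
  simp [Matrix.transpose, Units.smul_def, zsmul_eq_mul]

/-- Derivative at `0` of `t ↦ det(rows (v j + t • w j))`. -/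
lemma hasDerivAt_detRow (v w : Fin n → Fin n → ℝ) :
    HasDerivAt (fun t : ℝ => (Matrix.detRowAlternating (fun j => v j + t • w j) : ℝ))
      (∑ i, (Matrix.detRowAlternating (Function.update v i (w i)) : ℝ)) 0 := by
  have hfun : (fun t : ℝ => (Matrix.detRowAlternating (fun j => v j + t • w j) : ℝ))
      = fun t : ℝ => ∑ σ : Equiv.Perm (Fin n),
          ((Equiv.Perm.sign σ : ℤ) : ℝ) * ∏ j, (v j (σ j) + t * w j (σ j)) := by
    funext t
    rw [detRow_expand]
    refine Finset.sum_congr rfl fun σ _ => ?_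
    simp [Pi.smul_apply]
  rw [hfun]
  have key : ∀ σ : Equiv.Perm (Fin n),
      HasDerivAt (fun t : ℝ => ((Equiv.Perm.sign σ : ℤ) : ℝ) * ∏ j, (v j (σ j) + t * w j (σ j)))
        (((Equiv.Perm.sign σ : ℤ) : ℝ) *
          ∑ j, (∏ k ∈ Finset.univ.erase j, v k (σ k)) * w j (σ j)) 0 := by
    intro σ
    refine HasDerivAt.const_mul _ ?_
    have h1 : ∀ j ∈ Finset.univ (α := Fin n),
        HasDerivAt (fun t : ℝ => v j (σ j) + t * w j (σ j)) (w j (σ j)) 0 := by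
      intro j _
      simpa using ((hasDerivAt_id (0:ℝ)).mul_const (w j (σ j))).const_add (v j (σ j))
    have := HasDerivAt.fun_finsetProd h1
    simpa using this
  have hsum := HasDerivAt.fun_sum
    (u := Finset.univ)
    (A := fun σ t => ((Equiv.Perm.sign σ : ℤ) : ℝ) * ∏ j, (v j (σ j) + t * w j (σ j)))
    (A' := fun σ =>
      ((Equiv.Perm.sign σ : ℤ) : ℝ) *
        ∑ j, (∏ k ∈ Finset.univ.erase j, v k (σ k)) * w j (σ j))
    (fun σ _ => key σ)
  refine hsum.congr_deriv ?_
  symm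
  -- identify the two sums
  have target : ∀ i : Fin n, (Matrix.detRowAlternating (Function.update v i (w i)) : ℝ)
      = ∑ σ : Equiv.Perm (Fin n), ((Equiv.Perm.sign σ : ℤ) : ℝ) *
          ((∏ k ∈ Finset.univ.erase i, v k (σ k)) * w i (σ i)) := by
    intro i
    rw [detRow_expand]
    refine Finset.sum_congr rfl fun σ _ => ?_
    congr 1
    rw [← Finset.mul_prod_erase Finset.univ _ (Finset.mem_univ i)]
    rw [Function.update_self, mul_comm]
    congr 1
    exact Finset.prod_congr rfl fun k hk =>
      by rw [Function.update_of_ne (Finset.ne_of_mem_erase hk)]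
  rw [Finset.sum_congr rfl fun i _ => target i, Finset.sum_comm]
  exact Finset.sum_congr rfl fun σ _ => by simp [Finset.mul_sum]

/-- trace identity: `∑ i det(v with slot i replaced by A (v i)) = tr A * det v`. -/
lemma detRow_trace (A : (Fin n → ℝ) →ₗ[ℝ] (Fin n → ℝ)) (v : Fin n → Fin n → ℝ) :
    ∑ i, (Matrix.detRowAlternating (Function.update v i (A (v i))) : ℝ)
      = (∑ i, A (Pi.single i 1) i) * Matrix.detRowAlternating v := by
  set B := LinearMap.toMatrix' A with hB
  have h1 : HasDerivAt (fun t : ℝ => (Matrix.detRowAlternating (fun j => v j + t • A (v j)) : ℝ))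
      (∑ i, (Matrix.detRowAlternating (Function.update v i (A (v i))) : ℝ)) 0 :=
    hasDerivAt_detRow v (fun j => A (v j))
  have hFeq : (fun t : ℝ => (Matrix.detRowAlternating (fun j => v j + t • A (v j)) : ℝ))
      = fun t : ℝ => (Matrix.detRowAlternating
          (fun j => (Pi.single j 1 : Fin n → ℝ) + t • B j) : ℝ) * Matrix.detRowAlternating v := by
    funext t
    set L : (Fin n → ℝ) →ₗ[ℝ] (Fin n → ℝ) := LinearMap.id + t • A with hL
    have e1 : (fun j => v j + t • A (v j)) = ⇑L ∘ v := by
      funext j; simp [hL]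
    have e2 : (Matrix.detRowAlternating (⇑L ∘ v) : ℝ)
        = LinearMap.det L * Matrix.detRowAlternating v := by
      rw [← Pi.basisFun_det]
      exact Module.Basis.det_comp _ _ _
    have e3 : LinearMap.det L
        = Matrix.det (1 + t • B) := by
      rw [hL]
      rw [← LinearMap.det_toMatrix' ]
      congr 1
      rw [map_add, _root_.map_smul, hB]
      congr 1
      exact LinearMap.toMatrix'_id
    have e4 : Matrix.det (1 + t • B)
        = (Matrix.detRowAlternating (fun j => (Pi.single j 1 : Fin n → ℝ) + t • B j) : ℝ) := by
      have : (Matrix.of (fun j => (Pi.single j 1 : Fin n → ℝ) + t • B j)) = 1 + t • B := by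
        ext i j
        simp [Matrix.one_apply, Pi.single_apply, eq_comm]
      show _ = Matrix.det (Matrix.of _)
      rw [← this]; rfl
    rw [e1, e2, e3, e4]
  have h2 : HasDerivAt (fun t : ℝ => (Matrix.detRowAlternating
        (fun j => (Pi.single j 1 : Fin n → ℝ) + t • B j) : ℝ) * Matrix.detRowAlternating v)
      ((∑ i, A (Pi.single i 1) i) * Matrix.detRowAlternating v) 0 := by
    have := (hasDerivAt_detRow (fun j => (Pi.single j 1 : Fin n → ℝ)) (fun j => B j)).mul_const
      (Matrix.detRowAlternating v : ℝ)
    refine this.congr_deriv ?_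
    symm
    congr 1
    rw [Finset.sum_congr rfl fun i _ => detRow_update_basis i (B i)]
    refine Finset.sum_congr rfl fun i _ => ?_
    rw [hB, LinearMap.toMatrix'_apply]
  rw [hFeq] at h1
  exact h1.unique h2

lemma clm_sum (L : (Fin n → ℝ) →L[ℝ] ℝ) (u : Fin n → ℝ) :
    L u = ∑ i, u i * L (Pi.single i 1) := by
  have hu : u = ∑ i, u i • (Pi.single i 1 : Fin n → ℝ) := by
    funext s; simp [Pi.single_apply, Finset.sum_apply]
  conv_lhs => rw [hu]
  rw [map_sum]
  exact Finset.sum_congr rfl fun i _ => by rw [_root_.map_smul, smul_eq_mul]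

end DetHelpers

section helpers

variable {E : Type*} [NormedAddCommGroup E] [NormedSpace ℝ E]

lemma upd0 (a b z : E) : Function.update ![a, b] 0 z = ![z, b] := by
  funext j; fin_cases j <;> simp
lemma upd1 (a b z : E) : Function.update ![a, b] 1 z = ![a, z] := by
  funext j; fin_cases j <;> simp

variable (B : E [⋀^Fin 2]→ₗ[ℝ] ℝ)

lemma B2_addL (a a' b : E) : B ![a + a', b] = B ![a, b] + B ![a', b] := by
  have h := B.map_update_add ![a, b] 0 a a'
  rwa [upd0, upd0, upd0] at h
lemma B2_addR (a b b' : E) : B ![a, b + b'] = B ![a, b] + B ![a, b'] := by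
  have h := B.map_update_add ![a, b] 1 b b'
  rwa [upd1, upd1, upd1] at h
lemma B2_smulL (c : ℝ) (a b : E) : B ![c • a, b] = c * B ![a, b] := by
  have h := B.map_update_smul ![a, b] 0 c a
  rwa [upd0, upd0] at h
lemma B2_smulR (c : ℝ) (a b : E) : B ![a, c • b] = c * B ![a, b] := by
  have h := B.map_update_smul ![a, b] 1 c b
  rwa [upd1, upd1] at h

lemma B2_sumL {α : Type*} (s : Finset α) (f : α → E) (b : E) :
    B ![∑ l ∈ s, f l, b] = ∑ l ∈ s, B ![f l, b] := by
  have h := B.map_update_sum s 0 f ![0, b]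
  rw [upd0] at h
  rw [h]
  exact Finset.sum_congr rfl fun l _ => by rw [upd0]
lemma B2_sumR {α : Type*} (s : Finset α) (a : E) (f : α → E) :
    B ![a, ∑ l ∈ s, f l] = ∑ l ∈ s, B ![a, f l] := by
  have h := B.map_update_sum s 1 f ![a, 0]
  rw [upd1] at h
  rw [h]
  exact Finset.sum_congr rfl fun l _ => by rw [upd1]

end helpers

section pairmap

variable {r : ℕ}

def pL (r : ℕ) (i : Fin r) : Fin (2 * r) := ⟨2 * i.1, by have := i.2; omega⟩
def pR (r : ℕ) (i : Fin r) : Fin (2 * r) := ⟨2 * i.1 + 1, by have := i.2; omega⟩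

variable {E : Type*} [NormedAddCommGroup E] [NormedSpace ℝ E] (B : E [⋀^Fin 2]→ₗ[ℝ] ℝ)

/-- the index of the pair containing `p` -/
def pidx (p : Fin (2 * r)) : Fin r := ⟨p.1 / 2, by have := p.2; omega⟩

lemma pL_ne (p : Fin (2 * r)) {i : Fin r} (hi : i ≠ pidx p) : pL r i ≠ p := by
  intro h
  have h' := congrArg Fin.val h
  simp only [pL] at h'
  apply hi
  apply Fin.ext
  simp only [pidx]
  omega

lemma pR_ne (p : Fin (2 * r)) {i : Fin r} (hi : i ≠ pidx p) : pR r i ≠ p := by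
  intro h
  have h' := congrArg Fin.val h
  simp only [pR] at h'
  apply hi
  apply Fin.ext
  simp only [pidx]
  omega

lemma prod_split (v : Fin (2 * r) → E) (p : Fin (2 * r)) (w : E) :
    ∏ i : Fin r, B ![Function.update v p w (pL r i), Function.update v p w (pR r i)]
      = B ![Function.update v p w (pL r (pidx p)), Function.update v p w (pR r (pidx p))] *
        ∏ i ∈ Finset.univ.erase (pidx p), B ![v (pL r i), v (pR r i)] := by
  rw [← Finset.mul_prod_erase Finset.univ _ (Finset.mem_univ (pidx p))]
  congr 1
  refine Finset.prod_congr rfl fun i hi => ?_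
  have hi' : i ≠ pidx p := Finset.ne_of_mem_erase hi
  rw [Function.update_of_ne (pL_ne p hi'), Function.update_of_ne (pR_ne p hi')]

/-- The product of `B` over consecutive pairs, as a multilinear map. -/
def pairProd : MultilinearMap ℝ (fun _ : Fin (2 * r) => E) ℝ where
  toFun v := ∏ i : Fin r, B ![v (pL r i), v (pR r i)]
  map_update_add' := by
    intro inst v p x y
    cases Subsingleton.elim inst (instDecidableEqFin (2 * r))
    rw [prod_split, prod_split, prod_split]
    have hp : (pL r (pidx p) = p ∧ pR r (pidx p) ≠ p) ∨
        (pR r (pidx p) = p ∧ pL r (pidx p) ≠ p) := by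
      have h2 : p.1 = 2 * (p.1 / 2) ∨ p.1 = 2 * (p.1 / 2) + 1 := by omega
      rcases h2 with h2 | h2
      · exact Or.inl ⟨Fin.ext (by simp [pL, pidx]; omega),
          fun h => by have := congrArg Fin.val h; simp [pR, pidx] at this; omega⟩
      · exact Or.inr ⟨Fin.ext (by simp [pR, pidx]; omega),
          fun h => by have := congrArg Fin.val h; simp [pL, pidx] at this; omega⟩
    rcases hp with ⟨h1, h2⟩ | ⟨h1, h2⟩
    · rw [h1]
      simp only [Function.update_self, Function.update_of_ne h2]
      rw [B2_addL, add_mul]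
    · rw [h1]
      simp only [Function.update_self, Function.update_of_ne h2]
      rw [B2_addR, add_mul]
  map_update_smul' := by
    intro inst v p c x
    cases Subsingleton.elim inst (instDecidableEqFin (2 * r))
    rw [prod_split, prod_split]
    have hp : (pL r (pidx p) = p ∧ pR r (pidx p) ≠ p) ∨
        (pR r (pidx p) = p ∧ pL r (pidx p) ≠ p) := by
      have h2 : p.1 = 2 * (p.1 / 2) ∨ p.1 = 2 * (p.1 / 2) + 1 := by omega
      rcases h2 with h2 | h2
      · exact Or.inl ⟨Fin.ext (by simp [pL, pidx]; omega),
          fun h => by have := congrArg Fin.val h; simp [pR, pidx] at this; omega⟩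
      · exact Or.inr ⟨Fin.ext (by simp [pR, pidx]; omega),
          fun h => by have := congrArg Fin.val h; simp [pL, pidx] at this; omega⟩
    rcases hp with ⟨h1, h2⟩ | ⟨h1, h2⟩
    · rw [h1]
      simp only [Function.update_self, Function.update_of_ne h2]
      rw [B2_smulL, mul_assoc, smul_eq_mul]
    · rw [h1]
      simp only [Function.update_self, Function.update_of_ne h2]
      rw [B2_smulR, mul_assoc, smul_eq_mul]

end pairmap

section L1
-- needs detRow_basis from earlier file; restate here temporarily
lemma detRow_basis' {n : ℕ} :
    (Matrix.detRowAlternating (fun j => (Pi.single j 1 : Fin n → ℝ)) : ℝ) = 1 := by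
  have h : (fun j => (Pi.single j 1 : Fin n → ℝ)) = ⇑(Pi.basisFun ℝ (Fin n)) := by
    funext j; simp [Pi.basisFun_apply]
  rw [h, ← Pi.basisFun_det]
  exact Module.Basis.det_self _

lemma wpow_eq_det (r : ℕ) (Ω : (Fin (2*r) → ℝ) → (Fin 2 → (Fin (2*r) → ℝ)) → ℝ)
    (x : Fin (2*r) → ℝ) (B : (Fin (2*r) → ℝ) [⋀^Fin 2]→ₗ[ℝ] ℝ) (hB : ∀ w, Ω x w = B w)
    (v : Fin (2*r) → Fin (2*r) → ℝ) :
    wpow Ω r x v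
      = wpow Ω r x (fun i => (Pi.single i 1 : Fin (2*r) → ℝ)) * Matrix.detRowAlternating v := by
  set W := MultilinearMap.alternatization (pairProd B) with hWdef
  have hWv : ∀ u : Fin (2*r) → Fin (2*r) → ℝ,
      wpow Ω r x u = (1 / ((2 : ℝ) ^ r * (Nat.factorial r : ℝ))) * W u := by
    intro u
    unfold wpow
    congr 1
    rw [hWdef, MultilinearMap.alternatization_apply]
    refine Finset.sum_congr rfl fun σ _ => ?_
    rw [MultilinearMap.domDomCongr_apply, Units.smul_def, zsmul_eq_mul]
    congr 1
    refine Finset.prod_congr rfl fun i _ => ?_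
    rw [hB]
    rfl
  have he : ⇑(Pi.basisFun ℝ (Fin (2*r))) = fun i => (Pi.single i 1 : Fin (2*r) → ℝ) := by
    funext i; simp [Pi.basisFun_apply]
  have hW := W.eq_smul_basis_det (Pi.basisFun ℝ (Fin (2*r)))
  have happ : ∀ u : Fin (2*r) → Fin (2*r) → ℝ,
      (W u : ℝ) = W (fun i => (Pi.single i 1 : Fin (2*r) → ℝ)) * Matrix.detRowAlternating u := by
    intro u
    conv_lhs => rw [hW]
    rw [AlternatingMap.smul_apply, Pi.basisFun_det, he, smul_eq_mul]
  rw [hWv, hWv, happ, happ, detRow_basis', mul_one]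
  ring
end L1


lemma quad_deriv (m0 c1 c2 : ℝ) : HasDerivAt (fun t : ℝ => m0 + t * c1 + t^2 * c2) c1 0 := by
  have h1 : HasDerivAt (fun t : ℝ => m0 + t * c1) c1 0 := by
    simpa using ((hasDerivAt_id (0:ℝ)).mul_const c1).const_add m0
  have h2 : HasDerivAt (fun t : ℝ => t^2 * c2) 0 0 := by
    simpa using (hasDerivAt_pow 2 (0:ℝ)).mul_const c2
  have := h1.add h2
  simp only [add_zero] at this
  exact this

/-- The key algebraic identity (linearized `Pf(BᵀMB) = det B · Pf M`). -/
lemma key_identity (r : ℕ) (Ω : (Fin (2*r) → ℝ) → (Fin 2 → (Fin (2*r) → ℝ)) → ℝ)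
    (x : Fin (2*r) → ℝ) (B : (Fin (2*r) → ℝ) [⋀^Fin 2]→ₗ[ℝ] ℝ) (hB : ∀ w, Ω x w = B w)
    (A : Matrix (Fin (2*r)) (Fin (2*r)) ℝ)
    (M : Matrix (Fin (2*r)) (Fin (2*r)) ℝ)
    (hM : ∀ a b, M a b = Ω x ![(Pi.single a 1 : Fin (2*r) → ℝ), (Pi.single b 1 : Fin (2*r) → ℝ)]) :
    (1 / ((2 : ℝ) ^ r * (Nat.factorial r : ℝ))) *
      ∑ σ : Equiv.Perm (Fin (2*r)), ((Equiv.Perm.sign σ : ℤ) : ℝ) *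
        ∑ i : Fin r, (∏ j ∈ Finset.univ.erase i, M (σ (pL r j)) (σ (pR r j))) *
          ((Aᵀ * M + M * A) (σ (pL r i)) (σ (pR r i)))
      = wpow Ω r x (fun i => (Pi.single i 1 : Fin (2*r) → ℝ)) * ∑ i, A i i := by
  classical
  have hBe : ∀ a b, B ![(Pi.single a 1 : Fin (2*r) → ℝ), (Pi.single b 1 : Fin (2*r) → ℝ)]
      = M a b := by
    intro a b; rw [hM, hB]
  have hcol : ∀ q : Fin (2*r), (fun p => A p q) = ∑ p, A p q • (Pi.single p 1 : Fin (2*r) → ℝ) := by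
    intro q; funext s
    simp [Pi.single_apply, Finset.sum_apply]
  have h1 : ∀ a b, B ![(fun p => A p a), (Pi.single b 1 : Fin (2*r) → ℝ)] = (Aᵀ * M) a b := by
    intro a b
    rw [hcol, B2_sumL, Matrix.mul_apply]
    refine Finset.sum_congr rfl fun p _ => ?_
    rw [B2_smulL, hBe, Matrix.transpose_apply]
  have h2 : ∀ a b, B ![(Pi.single a 1 : Fin (2*r) → ℝ), (fun p => A p b)] = (M * A) a b := by
    intro a b
    rw [hcol, B2_sumR, Matrix.mul_apply]
    refine Finset.sum_congr rfl fun q _ => ?_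
    rw [B2_smulR, hBe]; ring
  have h3 : ∀ a b, B ![(fun p => A p a), (fun p => A p b)] = (Aᵀ * M * A) a b := by
    intro a b
    rw [show (fun p => A p a) = ∑ p, A p a • (Pi.single p 1 : Fin (2*r) → ℝ) from hcol a,
      B2_sumL]
    rw [Matrix.mul_assoc, Matrix.mul_apply]
    refine Finset.sum_congr rfl fun p _ => ?_
    rw [B2_smulL, h2, Matrix.transpose_apply]
  have hexp : ∀ (t : ℝ) (a b : Fin (2*r)),
      Ω x ![(Pi.single a 1 : Fin (2*r) → ℝ) + t • (fun p => A p a),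
            (Pi.single b 1 : Fin (2*r) → ℝ) + t • (fun p => A p b)]
        = M a b + t * ((Aᵀ * M + M * A) a b) + t^2 * ((Aᵀ * M * A) a b) := by
    intro t a b
    rw [hB]
    simp only [B2_addL B, B2_addR B, B2_smulL B, B2_smulR B]
    rw [hBe, h1, h2, h3, Matrix.add_apply]
    ring
  -- the moving-frame function
  have h_left : HasDerivAt
      (fun t : ℝ => wpow Ω r x
        (fun j => (Pi.single j 1 : Fin (2*r) → ℝ) + t • (fun p => A p j)))
      ((1 / ((2 : ℝ) ^ r * (Nat.factorial r : ℝ))) *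
        ∑ σ : Equiv.Perm (Fin (2*r)), ((Equiv.Perm.sign σ : ℤ) : ℝ) *
          ∑ i : Fin r, (∏ j ∈ Finset.univ.erase i, M (σ (pL r j)) (σ (pR r j))) *
            ((Aᵀ * M + M * A) (σ (pL r i)) (σ (pR r i)))) 0 := by
    have hfun : (fun t : ℝ => wpow Ω r x
        (fun j => (Pi.single j 1 : Fin (2*r) → ℝ) + t • (fun p => A p j)))
        = fun t : ℝ => (1 / ((2 : ℝ) ^ r * (Nat.factorial r : ℝ))) *
            ∑ σ : Equiv.Perm (Fin (2*r)), ((Equiv.Perm.sign σ : ℤ) : ℝ) *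
              ∏ i : Fin r, (M (σ (pL r i)) (σ (pR r i))
                + t * ((Aᵀ * M + M * A) (σ (pL r i)) (σ (pR r i)))
                + t^2 * ((Aᵀ * M * A) (σ (pL r i)) (σ (pR r i)))) := by
      funext t
      unfold wpow
      congr 1
      refine Finset.sum_congr rfl fun σ _ => ?_
      congr 1
      exact Finset.prod_congr rfl fun i _ => hexp t (σ (pL r i)) (σ (pR r i))
    rw [hfun]
    refine HasDerivAt.const_mul _ ?_
    refine HasDerivAt.fun_sum fun σ _ => ?_
    refine HasDerivAt.const_mul _ ?_
    have hfac : ∀ i ∈ Finset.univ (α := Fin r),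
        HasDerivAt (fun t : ℝ => M (σ (pL r i)) (σ (pR r i))
            + t * ((Aᵀ * M + M * A) (σ (pL r i)) (σ (pR r i)))
            + t^2 * ((Aᵀ * M * A) (σ (pL r i)) (σ (pR r i))))
          ((Aᵀ * M + M * A) (σ (pL r i)) (σ (pR r i))) 0 :=
      fun i _ => quad_deriv _ _ _
    have := HasDerivAt.fun_finsetProd hfac
    convert this using 1
    refine Finset.sum_congr rfl fun i _ => ?_
    rw [smul_eq_mul]
    congr 1
    refine Finset.prod_congr rfl fun j _ => ?_
    ring
  have h_right : HasDerivAt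
      (fun t : ℝ => wpow Ω r x
        (fun j => (Pi.single j 1 : Fin (2*r) → ℝ) + t • (fun p => A p j)))
      (wpow Ω r x (fun i => (Pi.single i 1 : Fin (2*r) → ℝ)) * ∑ i, A i i) 0 := by
    have hfun : (fun t : ℝ => wpow Ω r x
        (fun j => (Pi.single j 1 : Fin (2*r) → ℝ) + t • (fun p => A p j)))
        = fun t : ℝ => wpow Ω r x (fun i => (Pi.single i 1 : Fin (2*r) → ℝ)) *
            Matrix.detRowAlternating
              (fun j => (Pi.single j 1 : Fin (2*r) → ℝ) + t • (fun p => A p j)) := by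
      funext t
      exact wpow_eq_det r Ω x B hB _
    rw [hfun]
    have hd := (hasDerivAt_detRow (fun j => (Pi.single j 1 : Fin (2*r) → ℝ))
      (fun j => (fun p => A p j))).const_mul
      (wpow Ω r x (fun i => (Pi.single i 1 : Fin (2*r) → ℝ)))
    refine hd.congr_deriv ?_
    congr 1
    rw [Finset.sum_congr rfl fun i _ => detRow_update_basis i (fun p => A p i)]
  exact h_left.unique h_right

/-- If `Ω̄` is a symplectic form on the `2r`-dimensional space `P = ℝ^{2r}`,
`g > 0` is smooth, and `g X` is Hamiltonian with respect to `Ω̄`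
(i.e. `i_{gX} Ω̄ = dH`), then the volume form `g Ω̄^r` is invariant under `X`:
`L_X (g Ω̄^r) = 0`. -/
theorem stmt6 (r : ℕ) (hr : 0 < r)
    (Ω : (Fin (2 * r) → ℝ) → (Fin 2 → (Fin (2 * r) → ℝ)) → ℝ)
    (hform : IsPtwiseForm Ω)
    (hsmooth : ∀ v, ContDiff ℝ (⊤ : ℕ∞) (fun x => Ω x v))
    (hclosed : ∀ x v, dform Ω x v = 0)
    (hnondeg : ∀ x u, (∀ w, Ω x ![u, w] = 0) → u = 0)
    (X : (Fin (2 * r) → ℝ) → (Fin (2 * r) → ℝ)) (hX : ContDiff ℝ (⊤ : ℕ∞) X)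
    (g : (Fin (2 * r) → ℝ) → ℝ) (hg : ContDiff ℝ (⊤ : ℕ∞) g) (hgpos : ∀ x, 0 < g x)
    (H : (Fin (2 * r) → ℝ) → ℝ) (hH : ContDiff ℝ (⊤ : ℕ∞) H)
    (hHam : ∀ x v, iprod (fun y => g y • X y) Ω x v = fderiv ℝ H x (v 0)) :
    ∀ x v, lieD X (fun y w => g y * wpow Ω r y w) x v = 0 := by

  intro x v
  classical
  -- basic data
  set e : Fin (2*r) → Fin (2*r) → ℝ := fun i => Pi.single i 1 with he
  choose Bf hBf using hform
  set m : Fin (2*r) → Fin (2*r) → (Fin (2*r) → ℝ) → ℝ := fun a b y => Ω y ![e a, e b] with hm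
  set Y : (Fin (2*r) → ℝ) → (Fin (2*r) → ℝ) := fun y => g y • X y with hYdef
  have hYsm : ContDiff ℝ (⊤ : ℕ∞) Y := hg.smul hX
  have hYd : DifferentiableAt ℝ Y x := (hYsm.differentiable (by simp)).differentiableAt
  have hgd : DifferentiableAt ℝ g x := (hg.differentiable (by simp)).differentiableAt
  have hXd : DifferentiableAt ℝ X x := (hX.differentiable (by simp)).differentiableAt
  set A : Matrix (Fin (2*r)) (Fin (2*r)) ℝ :=
    Matrix.of (fun p q => fderiv ℝ Y x (e q) p) with hA
  set M : Matrix (Fin (2*r)) (Fin (2*r)) ℝ := Matrix.of (fun a b => m a b x) with hMdef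
  have hmsm : ∀ a b, ContDiff ℝ (⊤ : ℕ∞) (m a b) := fun a b => hsmooth ![e a, e b]
  have hmdiff : ∀ a b, HasFDerivAt (m a b) (fderiv ℝ (m a b) x) x :=
    fun a b => ((hmsm a b).differentiable (by simp) x).hasFDerivAt
  -- the scalar coefficient F
  set F : (Fin (2*r) → ℝ) → ℝ := fun y => wpow Ω r y e with hFdef
  have hwpow : ∀ y u, wpow Ω r y u = F y * Matrix.detRowAlternating u := by
    intro y u
    rw [hFdef]
    exact wpow_eq_det r Ω y (Bf y) (hBf y) u
  -- explicit derivative of F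
  set c0 : ℝ := 1 / ((2 : ℝ) ^ r * (Nat.factorial r : ℝ)) with hc0
  have hFder : HasFDerivAt F
      (c0 • ∑ σ : Equiv.Perm (Fin (2*r)), ((Equiv.Perm.sign σ : ℤ) : ℝ) •
        ∑ i : Fin r, (∏ j ∈ Finset.univ.erase i, m (σ (pL r j)) (σ (pR r j)) x) •
          fderiv ℝ (m (σ (pL r i)) (σ (pR r i))) x) x := by
    have hfun : F = fun y => c0 * ∑ σ : Equiv.Perm (Fin (2*r)),
        ((Equiv.Perm.sign σ : ℤ) : ℝ) * ∏ i : Fin r, m (σ (pL r i)) (σ (pR r i)) y := rfl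
    rw [hfun]
    refine HasFDerivAt.const_mul ?_ c0
    refine HasFDerivAt.fun_sum fun σ _ => ?_
    refine HasFDerivAt.const_mul ?_ _
    exact HasFDerivAt.finset_prod fun i _ => hmdiff _ _
  have hFdiff : DifferentiableAt ℝ F x := hFder.differentiableAt
  -- Hamiltonian condition in coordinates
  have hHamSum : ∀ (k : Fin (2*r)) (y : Fin (2*r) → ℝ),
      ∑ p, Y y p * m p k y = fderiv ℝ H y (e k) := by
    intro k y
    have h := hHam y ![e k]
    have h0 : iprod Y Ω y ![e k] = Ω y ![Y y, e k] := rfl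
    rw [h0] at h
    have hYexp : Y y = ∑ p, Y y p • e p := by
      funext s; simp [he, Pi.single_apply, Finset.sum_apply]
    rw [hBf y, hYexp, B2_sumL] at h
    have h2 : (![e k] : Fin 1 → Fin (2*r) → ℝ) 0 = e k := rfl
    rw [h2] at h
    rw [← h]
    refine Finset.sum_congr rfl fun p _ => ?_
    rw [B2_smulL, ← hBf y]
  -- second derivative symmetry of H
  have hf'd : DifferentiableAt ℝ (fderiv ℝ H) x :=
    (((hH.fderiv_right (m := (⊤ : ℕ∞)) (by simp)).differentiable (by simp)) x)
  have hsecond : ∀ u w : Fin (2*r) → ℝ,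
      fderiv ℝ (fderiv ℝ H) x u w = fderiv ℝ (fderiv ℝ H) x w u := by
    intro u w
    exact second_derivative_symmetric
      (fun y => ((hH.differentiable (by simp)) y).hasFDerivAt) hf'd.hasFDerivAt u w
  -- symmetric combination from the Hamiltonian condition
  have hsym : ∀ l k : Fin (2*r),
      ∑ p, (Y x p * fderiv ℝ (m p k) x (e l) + m p k x * A p l)
        = ∑ p, (Y x p * fderiv ℝ (m p l) x (e k) + m p l x * A p k) := by
    intro l k
    have hYp : ∀ p : Fin (2*r), HasFDerivAt (fun y => Y y p)
        ((ContinuousLinearMap.proj p).comp (fderiv ℝ Y x)) x :=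
      fun p => by
        exact ((ContinuousLinearMap.proj p).hasFDerivAt.comp x hYd.hasFDerivAt)
    have hLder : ∀ k : Fin (2*r), HasFDerivAt (fun y => ∑ p, Y y p * m p k y)
        (∑ p, (Y x p • fderiv ℝ (m p k) x
          + m p k x • ((ContinuousLinearMap.proj p).comp (fderiv ℝ Y x)))) x :=
      fun k => HasFDerivAt.fun_sum fun p _ => (hYp p).mul (hmdiff p k)
    have hfun : ∀ k : Fin (2*r),
        (fun y => ∑ p, Y y p * m p k y) = fun y => fderiv ℝ H y (e k) :=
      fun k => funext fun y => hHamSum k y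
    have hRder : ∀ k : Fin (2*r),
        fderiv ℝ (fun y => fderiv ℝ H y (e k)) x
          = (fderiv ℝ (fderiv ℝ H) x).flip (e k) := by
      intro k
      rw [fderiv_clm_apply hf'd (differentiableAt_const (e k))]
      simp
    have hval : ∀ l k : Fin (2*r),
        ∑ p, (Y x p * fderiv ℝ (m p k) x (e l) + m p k x * A p l)
          = fderiv ℝ (fderiv ℝ H) x (e l) (e k) := by
      intro l k
      have h1 : fderiv ℝ (fun y => ∑ p, Y y p * m p k y) x
          = ∑ p, (Y x p • fderiv ℝ (m p k) x
            + m p k x • ((ContinuousLinearMap.proj p).comp (fderiv ℝ Y x))) :=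
        (hLder k).fderiv
      have h2 := congrArg (fun L : (Fin (2*r) → ℝ) →L[ℝ] ℝ => L (e l)) h1
      simp only [ContinuousLinearMap.sum_apply, ContinuousLinearMap.add_apply,
        ContinuousLinearMap.smul_apply, ContinuousLinearMap.comp_apply,
        ContinuousLinearMap.proj_apply, smul_eq_mul] at h2
      rw [hfun k, hRder k] at h2
      simp only [ContinuousLinearMap.flip_apply] at h2
      simp only [hA, Matrix.of_apply]
      rw [← h2]
    rw [hval l k, hval k l, hsecond]
  -- closedness in coordinates
  have hclosed' : ∀ a b c : Fin (2*r),
      fderiv ℝ (m b c) x (e a) - fderiv ℝ (m a c) x (e b) + fderiv ℝ (m a b) x (e c) = 0 := by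
    intro a b c
    have h := hclosed x ![e a, e b, e c]
    unfold dform at h
    rw [Fin.sum_univ_three] at h
    have e0 : (fun j : Fin 2 => (![e a, e b, e c] : Fin 3 → Fin (2*r) → ℝ)
        ((0 : Fin 3).succAbove j)) = ![e b, e c] := by
      funext j; fin_cases j <;> rfl
    have e1 : (fun j : Fin 2 => (![e a, e b, e c] : Fin 3 → Fin (2*r) → ℝ)
        ((1 : Fin 3).succAbove j)) = ![e a, e c] := by
      funext j; fin_cases j <;> rfl
    have e2 : (fun j : Fin 2 => (![e a, e b, e c] : Fin 3 → Fin (2*r) → ℝ)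
        ((2 : Fin 3).succAbove j)) = ![e a, e b] := by
      funext j; fin_cases j <;> rfl
    rw [e0, e1, e2] at h
    norm_num at h
    have hma : (fun y => Ω y ![e b, e c]) = m b c := rfl
    have hmb : (fun y => Ω y ![e a, e c]) = m a c := rfl
    have hmc : (fun y => Ω y ![e a, e b]) = m a b := rfl
    rw [hma, hmb, hmc] at h
    rw [show (![e a, e b, e c] : Fin 3 → Fin (2*r) → ℝ) 2 = e c from rfl] at h
    linarith
  -- antisymmetry
  have hanti : ∀ a b : Fin (2*r), m a b x = - m b a x := by
    intro a b
    have hs := (Bf x).map_swap ![e b, e a] (by decide : (0 : Fin 2) ≠ 1)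
    have hv : (![e b, e a] : Fin 2 → Fin (2*r) → ℝ) ∘ Equiv.swap 0 1 = ![e a, e b] := by
      funext j; fin_cases j <;> simp [Equiv.swap_apply_left, Equiv.swap_apply_right]
    rw [hv] at hs
    rw [hm]
    simp only
    rw [hBf x, hBf x, hs]
  -- the Lie derivative identity for the coefficient matrix
  have hLie : ∀ l k : Fin (2*r),
      fderiv ℝ (m l k) x (Y x) = -((Aᵀ * M + M * A) l k) := by
    intro l k
    rw [clm_sum (fderiv ℝ (m l k) x) (Y x)]
    have hcl : ∀ p, fderiv ℝ (m l k) x (e p)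
        = fderiv ℝ (m p k) x (e l) - fderiv ℝ (m p l) x (e k) := by
      intro p
      have := hclosed' p l k
      linarith
    rw [Finset.sum_congr rfl fun p _ => by rw [hcl p]]
    have hsym' := hsym l k
    have hAM : (Aᵀ * M + M * A) l k = ∑ p, (A p l * m p k x - m p l x * A p k) := by
      rw [Matrix.add_apply, Matrix.mul_apply, Matrix.mul_apply, ← Finset.sum_add_distrib]
      refine Finset.sum_congr rfl fun p _ => ?_
      rw [Matrix.transpose_apply]
      have h1 : M p k = m p k x := rfl
      have h2 : M l p = - m p l x := hanti l p
      rw [h1, h2]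
      ring
    rw [hAM]
    have hexpand : ∑ p, Y x p * (fderiv ℝ (m p k) x (e l) - fderiv ℝ (m p l) x (e k))
        = (∑ p, (Y x p * fderiv ℝ (m p k) x (e l) + m p k x * A p l))
          - (∑ p, (Y x p * fderiv ℝ (m p l) x (e k) + m p l x * A p k))
          - ∑ p, (A p l * m p k x - m p l x * A p k) := by
      rw [← Finset.sum_sub_distrib, ← Finset.sum_sub_distrib]
      refine Finset.sum_congr rfl fun p _ => ?_
      ring
    rw [hexpand, hsym']
    ring
  -- the derivative of F in the direction Y x
  have hDFY : fderiv ℝ F x (Y x) = -(F x * ∑ i, A i i) := by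
    have h1 : fderiv ℝ F x (Y x)
        = c0 * ∑ σ : Equiv.Perm (Fin (2*r)), ((Equiv.Perm.sign σ : ℤ) : ℝ) *
            ∑ i : Fin r, (∏ j ∈ Finset.univ.erase i, m (σ (pL r j)) (σ (pR r j)) x) *
              fderiv ℝ (m (σ (pL r i)) (σ (pR r i))) x (Y x) := by
      rw [hFder.fderiv]
      simp [ContinuousLinearMap.sum_apply, ContinuousLinearMap.smul_apply, smul_eq_mul]
    rw [h1]
    have h2 : ∀ σ : Equiv.Perm (Fin (2*r)), ∀ i : Fin r,
        (∏ j ∈ Finset.univ.erase i, m (σ (pL r j)) (σ (pR r j)) x) *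
            fderiv ℝ (m (σ (pL r i)) (σ (pR r i))) x (Y x)
          = -((∏ j ∈ Finset.univ.erase i, M (σ (pL r j)) (σ (pR r j))) *
              ((Aᵀ * M + M * A) (σ (pL r i)) (σ (pR r i)))) := by
      intro σ i
      rw [hLie]
      have : ∀ a b : Fin (2*r), m a b x = M a b := fun a b => rfl
      rw [Finset.prod_congr rfl fun j _ => this (σ (pL r j)) (σ (pR r j))]
      ring
    have h3 : ∀ σ : Equiv.Perm (Fin (2*r)),
        ((Equiv.Perm.sign σ : ℤ) : ℝ) *
          ∑ i : Fin r, (∏ j ∈ Finset.univ.erase i, m (σ (pL r j)) (σ (pR r j)) x) *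
            fderiv ℝ (m (σ (pL r i)) (σ (pR r i))) x (Y x)
        = -(((Equiv.Perm.sign σ : ℤ) : ℝ) *
            ∑ i : Fin r, (∏ j ∈ Finset.univ.erase i, M (σ (pL r j)) (σ (pR r j))) *
              ((Aᵀ * M + M * A) (σ (pL r i)) (σ (pR r i)))) := by
      intro σ
      rw [Finset.sum_congr rfl fun i _ => h2 σ i, Finset.sum_neg_distrib]
      ring
    rw [Finset.sum_congr rfl fun σ _ => h3 σ, Finset.sum_neg_distrib]
    have hkey := key_identity r Ω x (Bf x) (hBf x) A M (fun a b => rfl)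
    have hkey' : c0 * ∑ σ : Equiv.Perm (Fin (2*r)), ((Equiv.Perm.sign σ : ℤ) : ℝ) *
        ∑ i : Fin r, (∏ j ∈ Finset.univ.erase i, M (σ (pL r j)) (σ (pR r j))) *
          ((Aᵀ * M + M * A) (σ (pL r i)) (σ (pR r i)))
        = F x * ∑ i, A i i := hkey
    linear_combination -hkey'
  -- trace of A
  set τ : ℝ := ∑ i, fderiv ℝ X x (e i) i with hτ
  have hDY : fderiv ℝ Y x = g x • fderiv ℝ X x + (fderiv ℝ g x).smulRight (X x) :=
    (hgd.hasFDerivAt.smul hXd.hasFDerivAt).fderiv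
  have htrA : ∑ i, A i i = g x * τ + fderiv ℝ g x (X x) := by
    have h1 : ∀ i : Fin (2*r), A i i = g x * fderiv ℝ X x (e i) i
        + fderiv ℝ g x (e i) * X x i := by
      intro i
      rw [hA]
      show fderiv ℝ Y x (e i) i = _
      rw [hDY]
      simp [Pi.smul_apply, smul_eq_mul]
    rw [Finset.sum_congr rfl fun i _ => h1 i, Finset.sum_add_distrib, ← Finset.mul_sum, hτ]
    congr 1
    rw [clm_sum (fderiv ℝ g x) (X x)]
    exact Finset.sum_congr rfl fun i _ => by ring
  -- final assembly
  show lieD X (fun y w => g y * wpow Ω r y w) x v = 0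
  unfold lieD
  have hfun1 : (fun y => (fun y w => g y * wpow Ω r y w) y v)
      = fun y => (g y * F y) * Matrix.detRowAlternating v := by
    funext y
    simp only
    rw [hwpow y v]
    ring
  rw [hfun1]
  have hgF : DifferentiableAt ℝ (fun y => g y * F y) x := hgd.mul hFdiff
  rw [fderiv_mul_const hgF]
  have hterm2 : ∀ i : Fin (2*r), (fun y w => g y * wpow Ω r y w) x
      (Function.update v i (fderiv ℝ X x (v i)))
      = g x * (F x * Matrix.detRowAlternating (Function.update v i (fderiv ℝ X x (v i)))) := by
    intro i
    simp only
    rw [hwpow]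
  rw [Finset.sum_congr rfl fun i _ => hterm2 i]
  have htr := detRow_trace ((fderiv ℝ X x : (Fin (2*r) → ℝ) →L[ℝ] (Fin (2*r) → ℝ)) :
      (Fin (2*r) → ℝ) →ₗ[ℝ] (Fin (2*r) → ℝ)) v
  simp only [ContinuousLinearMap.coe_coe] at htr
  have hsum2 : ∑ i, g x * (F x * Matrix.detRowAlternating
      (Function.update v i (fderiv ℝ X x (v i))))
      = g x * F x * (τ * Matrix.detRowAlternating v) := by
    rw [← Finset.mul_sum, ← Finset.mul_sum, htr, hτ]
    ring
  rw [hsum2]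
  have hmul : fderiv ℝ (fun y => g y * F y) x
      = g x • fderiv ℝ F x + F x • fderiv ℝ g x := fderiv_mul hgd hFdiff
  have hgDFX : g x * fderiv ℝ F x (X x)
      = -(F x * (g x * τ + fderiv ℝ g x (X x))) := by
    have hYx : Y x = g x • X x := rfl
    have h1 : fderiv ℝ F x (Y x) = g x * fderiv ℝ F x (X x) := by
      rw [hYx, ContinuousLinearMap.map_smul, smul_eq_mul]
    rw [← h1, hDFY, htrA]
  simp only [ContinuousLinearMap.smul_apply, ContinuousLinearMap.add_apply, hmul,
    smul_eq_mul]
  linear_combination Matrix.detRowAlternating v * hgDFX
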